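/- For nonnegative integers N ≥ 1 and ℓ ≥ 0, one has (1/2)∫_{−1}^1 N ((1+t)/2)^{N−1} P_ℓ(t) dt = ∑_{k=0}^ℓ (−1)^k C(ℓ,k)·C(ℓ+k,k)/C(N+k,k). -/

import Mathlib

/-- The Legendre polynomial of degree `n` (normalized so `P n 1 = 1`),
via the Rodrigues formula. -/
noncomputable def legendreP (n : ℕ) : Polynomial ℝ :=
  Polynomial.C (1 / ((2:ℝ)^n * n.factorial)) *
    (Polynomial.derivative^[n] ((Polynomial.X^2 - 1)^n))

open Finset Polynomial

lemma triangle_sum {M : Type*} [AddCommMonoid M] (n : ℕ) (f : ℕ → ℕ → M) :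
    ∑ k ∈ Finset.range (n+1), ∑ j ∈ Finset.range (n+1-k), f k j
      = ∑ m ∈ Finset.range (n+1), ∑ k ∈ Finset.range (m+1), f k (m-k) := by
  rw [Finset.sum_sigma', Finset.sum_sigma']
  refine Finset.sum_nbij' (fun p => ⟨p.1 + p.2, p.1⟩) (fun q => ⟨q.2, q.1 - q.2⟩) ?_ ?_ ?_ ?_ ?_
  · rintro ⟨k, j⟩ hp
    simp only [Finset.mem_sigma, Finset.mem_range] at hp ⊢
    omega
  · rintro ⟨m, k⟩ hq
    simp only [Finset.mem_sigma, Finset.mem_range] at hq ⊢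
    omega
  · rintro ⟨k, j⟩ hp
    simp
  · rintro ⟨m, k⟩ hq
    simp only [Finset.mem_sigma, Finset.mem_range] at hq
    have : k + (m - k) = m := by omega
    simp [this]
  · rintro ⟨k, j⟩ hp
    simp

lemma nat_id (l m : ℕ) (hm : m ≤ l) :
    ∑ k ∈ range (m+1), l.choose k * l.choose k * (l-k).choose (m-k)
      = l.choose m * (l+m).choose m := by
  have h1 : ∀ k ∈ range (m+1), l.choose k * l.choose k * (l-k).choose (m-k)
      = l.choose m * (m.choose k * l.choose k) := by
    intro k hk
    rw [mem_range] at hk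
    have hkm : k ≤ m := by omega
    have := Nat.choose_mul (n := l) hkm
    calc l.choose k * l.choose k * (l-k).choose (m-k)
        = l.choose k * (l.choose k * (l-k).choose (m-k)) := by ring
      _ = l.choose k * (l.choose m * m.choose k) := by rw [← this]
      _ = l.choose m * (m.choose k * l.choose k) := by ring
  rw [Finset.sum_congr rfl h1, ← Finset.mul_sum]
  congr 1
  have hv := Nat.add_choose_eq m l m
  rw [Finset.Nat.sum_antidiagonal_eq_sum_range_succ_mk] at hv
  rw [Nat.add_comm l m, hv,
    ← Finset.sum_range_reflect (fun k => m.choose k * l.choose k) (m+1)]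
  apply Finset.sum_congr rfl
  intro k hk
  rw [mem_range] at hk
  simp only [Nat.add_sub_cancel]
  congr 1
  exact Nat.choose_symm (by omega)


lemma legendre_mid (l : ℕ) (t : ℝ) :
    (legendreP l).eval t = ∑ k ∈ range (l+1),
      ((l.choose k : ℝ))^2 * ((t-1)/2)^k * ((t+1)/2)^(l-k) := by
  have hC : (C 1 : Polynomial ℝ) = 1 := by simp
  have hfact : (X^2 - 1 : Polynomial ℝ)^l = (X - C 1)^l * (X + C 1)^l := by
    rw [← mul_pow, hC]; ring
  rw [legendreP, hfact, Polynomial.iterate_derivative_mul]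
  simp only [Polynomial.iterate_derivative_X_sub_pow, Polynomial.iterate_derivative_X_add_pow,
    Polynomial.eval_mul, Polynomial.eval_C, Polynomial.eval_finset_sum, smul_mul_assoc,
    Polynomial.eval_smul, nsmul_eq_mul, Polynomial.eval_pow, Polynomial.eval_sub,
    Polynomial.eval_add, Polynomial.eval_X, Polynomial.eval_one, mul_smul_comm, smul_eq_mul]
  rw [Finset.mul_sum]
  apply Finset.sum_congr rfl
  intro k hk
  rw [mem_range] at hk
  have hkl : k ≤ l := by omega
  have h1 : l - (l - k) = k := by omega
  rw [h1]
  have hc : (l.choose k : ℝ) * ((l.descFactorial (l-k) : ℝ) * (l.descFactorial k : ℝ))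
      = (l.choose k : ℝ)^2 * (l.factorial : ℝ) := by
    have e1 : l.descFactorial (l-k) = (l-k).factorial * l.choose (l-k) :=
      Nat.descFactorial_eq_factorial_mul_choose l (l-k)
    have e2 : l.descFactorial k = k.factorial * l.choose k :=
      Nat.descFactorial_eq_factorial_mul_choose l k
    have e3 : l.choose (l-k) = l.choose k := Nat.choose_symm hkl
    have e4 : l.choose k * k.factorial * (l-k).factorial = l.factorial :=
      Nat.choose_mul_factorial_mul_factorial hkl
    push_cast [e1, e2, e3, ← e4]
    ring
  have h2 : ((2:ℝ)^l) = 2^k * 2^(l-k) := by rw [← pow_add]; congr 1; omega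
  have hfac : (l.factorial : ℝ) ≠ 0 := Nat.cast_ne_zero.mpr (Nat.factorial_ne_zero l)
  have h2k : ((2:ℝ)^k) ≠ 0 := by positivity
  have h2lk : ((2:ℝ)^(l-k)) ≠ 0 := by positivity
  rw [div_pow, div_pow, h2]
  field_simp
  simp only [Polynomial.eval_natCast]
  linear_combination ((t-1)^k * (t+1)^(l-k)) * hc

lemma legendre_eval (l : ℕ) (t : ℝ) :
    (legendreP l).eval t = ∑ k ∈ range (l+1),
      (-1:ℝ)^k * (l.choose k : ℝ) * ((l+k).choose k : ℝ) * ((1-t)/2)^k := by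
  have hy : ∀ y : ℝ, ∑ k ∈ range (l+1), ((l.choose k : ℝ))^2 * (-y)^k * (1-y)^(l-k)
      = ∑ k ∈ range (l+1), (-1:ℝ)^k * (l.choose k : ℝ) * ((l+k).choose k : ℝ) * y^k := by
    intro y
    have expand : ∀ n : ℕ, (1-y)^n = ∑ j ∈ range (n+1), ((n.choose j : ℝ)) * (-y)^j := by
      intro n
      have h := add_pow (-y) 1 n
      rw [show (-y) + 1 = 1 - y by ring] at h
      rw [h]
      exact Finset.sum_congr rfl (fun j hj => by rw [one_pow]; ring)
    calc ∑ k ∈ range (l+1), ((l.choose k : ℝ))^2 * (-y)^k * (1-y)^(l-k)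
        = ∑ k ∈ range (l+1), ∑ j ∈ range (l+1-k),
            ((l.choose k : ℝ)^2 * ((l-k).choose j : ℝ)) * (-y)^(k+j) := by
          apply Finset.sum_congr rfl
          intro k hk
          rw [mem_range] at hk
          rw [expand, Finset.mul_sum, show l - k + 1 = l + 1 - k by omega]
          exact Finset.sum_congr rfl (fun j hj => by rw [pow_add]; ring)
      _ = ∑ m ∈ range (l+1), ∑ k ∈ range (m+1),
            ((l.choose k : ℝ)^2 * ((l-k).choose (m-k) : ℝ)) * (-y)^(k+(m-k)) :=
          triangle_sum l (fun k j => ((l.choose k : ℝ)^2 * ((l-k).choose j : ℝ)) * (-y)^(k+j))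
      _ = ∑ m ∈ range (l+1), (-1:ℝ)^m * (l.choose m : ℝ) * ((l+m).choose m : ℝ) * y^m := by
          apply Finset.sum_congr rfl
          intro m hm
          rw [mem_range] at hm
          have hml : m ≤ l := by omega
          have : ∀ k ∈ range (m+1),
              ((l.choose k : ℝ)^2 * ((l-k).choose (m-k) : ℝ)) * (-y)^(k+(m-k))
                = ((l.choose k * l.choose k * (l-k).choose (m-k) : ℕ) : ℝ) * (-y)^m := by
            intro k hk
            rw [mem_range] at hk
            rw [show k + (m-k) = m by omega]
            push_cast
            ring
          rw [Finset.sum_congr rfl this, ← Finset.sum_mul, ← Nat.cast_sum,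
            nat_id l m hml, neg_pow]
          push_cast
          ring
  have h := hy ((1-t)/2)
  rw [legendre_mid]
  rw [← h]
  apply Finset.sum_congr rfl
  intro k hk
  rw [show -((1-t)/2) = (t-1)/2 by ring, show (1 : ℝ) - (1-t)/2 = (t+1)/2 by ring]

lemma beta_int : ∀ (k N : ℕ), 1 ≤ N →
    (1/2:ℝ) * ∫ t in (-1:ℝ)..1, (N:ℝ) * ((1+t)/2)^(N-1) * ((1-t)/2)^k
      = 1 / (((N+k).choose k : ℝ)) := by
  intro k
  induction k with
  | zero =>
    intro N hN
    simp only [pow_zero, mul_one, Nat.add_zero, Nat.choose_zero_right, Nat.cast_one]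
    have hd : ∀ t : ℝ, HasDerivAt (fun s : ℝ => ((1+s)/2)^N)
        ((N:ℝ) * ((1+t)/2)^(N-1) * (1/2)) t := by
      intro t
      have h1 : HasDerivAt (fun s : ℝ => (1+s)/2) (1/2) t := by
        simpa using ((hasDerivAt_id t).const_add 1).div_const 2
      simpa using h1.fun_pow N
    have hint := intervalIntegral.integral_eq_sub_of_hasDerivAt
      (f := fun s : ℝ => ((1+s)/2)^N)
      (f' := fun s : ℝ => (N:ℝ) * ((1+s)/2)^(N-1) * (1/2)) (a := -1) (b := 1)
      (fun t _ => hd t) (Continuous.intervalIntegrable (by fun_prop) _ _)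
    have h2 : ∫ t in (-1:ℝ)..1, (N:ℝ) * ((1+t)/2)^(N-1)
        = 2 * ∫ t in (-1:ℝ)..1, (N:ℝ) * ((1+t)/2)^(N-1) * (1/2) := by
      rw [← intervalIntegral.integral_const_mul]
      apply intervalIntegral.integral_congr
      intro t _
      ring
    rw [h2, hint]
    norm_num [zero_pow (by omega : N ≠ 0)]
  | succ k ih =>
    intro N hN
    have hNn : (0:ℝ) < (N:ℝ) + 1 := by positivity
    have hch : (((N+1+k).choose k : ℝ)) ≠ 0 :=
      Nat.cast_ne_zero.mpr (Nat.choose_pos (Nat.le_add_left k (N+1))).ne'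
    have hch2 : (((N+(k+1)).choose (k+1) : ℝ)) ≠ 0 :=
      Nat.cast_ne_zero.mpr (Nat.choose_pos (Nat.le_add_left (k+1) N)).ne'
    set u : ℝ → ℝ := fun t => ((1-t)/2)^(k+1) with hu_def
    set v : ℝ → ℝ := fun t => ((1+t)/2)^N with hv_def
    set u' : ℝ → ℝ := fun t => ((k:ℝ)+1) * ((1-t)/2)^k * (-(1/2)) with hu'_def
    set v' : ℝ → ℝ := fun t => (N:ℝ) * ((1+t)/2)^(N-1) * (1/2) with hv'_def
    have hu : ∀ t : ℝ, HasDerivAt u (u' t) t := by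
      intro t
      have h1 : HasDerivAt (fun s : ℝ => (1-s)/2) (-(1/2)) t := by
        have := ((hasDerivAt_id t).const_sub 1).div_const 2
        norm_num at this ⊢
        convert this using 1
      have := h1.fun_pow (k+1)
      simpa [hu_def, hu'_def] using this
    have hv : ∀ t : ℝ, HasDerivAt v (v' t) t := by
      intro t
      have h1 : HasDerivAt (fun s : ℝ => (1+s)/2) (1/2) t := by
        simpa using ((hasDerivAt_id t).const_add 1).div_const 2
      simpa [hv_def, hv'_def] using h1.fun_pow N
    have hibp := intervalIntegral.integral_mul_deriv_eq_deriv_mul_of_hasDerivAt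
      (a := -1) (b := 1) (u := u) (v := v) (u' := u') (v' := v')
      (fun t _ => (hu t).continuousAt.continuousWithinAt)
      (fun t _ => (hv t).continuousAt.continuousWithinAt)
      (fun t _ => hu t) (fun t _ => hv t)
      (Continuous.intervalIntegrable (by fun_prop) _ _)
      (Continuous.intervalIntegrable (by fun_prop) _ _)
    have hu1 : u 1 = 0 := by simp [hu_def, zero_pow (by omega : k+1 ≠ 0)]
    have hvm1 : v (-1) = 0 := by simp [hv_def, zero_pow (by omega : N ≠ 0)]
    rw [hu1, hvm1] at hibp
    -- LHS integrand equals 2 * (u t * v' t)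
    have e1 : ∫ t in (-1:ℝ)..1, (N:ℝ) * ((1+t)/2)^(N-1) * ((1-t)/2)^(k+1)
        = 2 * ∫ t in (-1:ℝ)..1, u t * v' t := by
      rw [← intervalIntegral.integral_const_mul]
      apply intervalIntegral.integral_congr
      intro t _
      simp only [hu_def, hv'_def]
      ring
    -- the integral of u' * v in terms of J
    set J : ℝ := ∫ t in (-1:ℝ)..1, ((1-t)/2)^k * ((1+t)/2)^N with hJ_def
    have e2 : ∫ t in (-1:ℝ)..1, u' t * v t = -(((k:ℝ)+1)/2) * J := by
      rw [hJ_def, ← intervalIntegral.integral_const_mul]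
      apply intervalIntegral.integral_congr
      intro t _
      simp only [hu'_def, hv_def]
      ring
    -- ih at N+1 gives the value of J
    have hih := ih (N+1) (by omega)
    have e3 : ∫ t in (-1:ℝ)..1, ((N:ℝ)+1) * ((1+t)/2)^(N+1-1) * ((1-t)/2)^k
        = ((N:ℝ)+1) * J := by
      rw [hJ_def, ← intervalIntegral.integral_const_mul]
      apply intervalIntegral.integral_congr
      intro t _
      rw [show N+1-1 = N from rfl]
      ring
    rw [show ((N+1 : ℕ):ℝ) = (N:ℝ)+1 by push_cast; ring] at hih
    rw [e3] at hih
    -- hih : 1/2 * ((N+1) * J) = 1/((N+1+k).choose k)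
    have hJ : J = 2 / (((N:ℝ)+1) * ((N+1+k).choose k : ℝ)) := by
      field_simp at hih ⊢
      linarith [hih]
    rw [e1, hibp, e2, hJ]
    have hkey := Nat.choose_succ_right_eq (N+1+k) k
    rw [show N+1+k-k = N+1 by omega] at hkey
    have hkeyR : (((N+1+k).choose (k+1) : ℝ)) * ((k:ℝ)+1)
        = (((N+1+k).choose k : ℝ)) * ((N:ℝ)+1) := by exact_mod_cast hkey
    rw [show N+(k+1) = N+1+k by omega]
    have hch2' : (((N+1+k).choose (k+1) : ℝ)) ≠ 0 := by
      rw [show N+1+k = N+(k+1) by omega]; exact hch2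
    field_simp
    linear_combination hkeyR


/-- For `N ≥ 1` and `ℓ ≥ 0`,
`(1/2)∫_{−1}^1 N((1+t)/2)^{N−1} P_ℓ(t) dt
  = ∑_{k=0}^ℓ (−1)^k C(ℓ,k)C(ℓ+k,k)/C(N+k,k)`. -/
theorem stmt_10 (N l : ℕ) (hN : 1 ≤ N) :
    (1/2 : ℝ) * ∫ t in (-1:ℝ)..1, (N:ℝ) * ((1+t)/2)^(N-1) * (legendreP l).eval t =
      ∑ k ∈ Finset.range (l+1), (-1:ℝ)^k * (Nat.choose l k : ℝ) *
        (Nat.choose (l+k) k : ℝ) / (Nat.choose (N+k) k : ℝ) := by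
  have hint : ∫ t in (-1:ℝ)..1, (N:ℝ) * ((1+t)/2)^(N-1) * (legendreP l).eval t
      = ∑ k ∈ range (l+1), (-1:ℝ)^k * (l.choose k : ℝ) * ((l+k).choose k : ℝ) *
          ∫ t in (-1:ℝ)..1, (N:ℝ) * ((1+t)/2)^(N-1) * ((1-t)/2)^k := by
    rw [intervalIntegral.integral_congr (g := fun t => ∑ k ∈ range (l+1),
        (-1:ℝ)^k * (l.choose k : ℝ) * ((l+k).choose k : ℝ) *
          ((N:ℝ) * ((1+t)/2)^(N-1) * ((1-t)/2)^k))
      (by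
        intro t _
        dsimp only
        rw [legendre_eval, Finset.mul_sum]
        exact Finset.sum_congr rfl (fun k _ => by ring))]
    rw [intervalIntegral.integral_finset_sum
      (fun k _ => Continuous.intervalIntegrable (by fun_prop) _ _)]
    exact Finset.sum_congr rfl (fun k _ => by
      rw [intervalIntegral.integral_const_mul])
  rw [hint, Finset.mul_sum]
  apply Finset.sum_congr rfl
  intro k _
  have hb := beta_int k N hN
  calc (1/2:ℝ) * ((-1:ℝ)^k * (l.choose k : ℝ) * ((l+k).choose k : ℝ) *
        ∫ t in (-1:ℝ)..1, (N:ℝ) * ((1+t)/2)^(N-1) * ((1-t)/2)^k)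
      = (-1:ℝ)^k * (l.choose k : ℝ) * ((l+k).choose k : ℝ) *
        ((1/2:ℝ) * ∫ t in (-1:ℝ)..1, (N:ℝ) * ((1+t)/2)^(N-1) * ((1-t)/2)^k) := by ring
    _ = (-1:ℝ)^k * (l.choose k : ℝ) * ((l+k).choose k : ℝ) * (1 / ((N+k).choose k : ℝ)) := by
        rw [hb]
    _ = (-1:ℝ)^k * (l.choose k : ℝ) * ((l+k).choose k : ℝ) / ((N+k).choose k : ℝ) := by
        rw [mul_one_div]
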